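/- Let G be a twin-free bipartite graph (no two distinct vertices have the same neighbour set) in which some vertex v has degree at least 3. Then there exist two further vertices on the same side as v distinguishing among three neighbours of v; concretely, G contains as an induced subgraph one of the three bipartite graphs whose biadjacency matrices are [[1,1,1],[1,0,0],[0,0,1]] (up to row/column permutation and transpose), [[1,1,0],[1,1,1],[0,1,0]]-type, or [[1,1,0],[1,1,1],[0,1,1]]. -/

import Mathlib

open Matrix

set_option maxHeartbeats 1000000 in
private lemma kernel3 (v0 v1 v2 w0 w1 w2 : Bool)
    (d01 : v0 ≠ v1 ∨ w0 ≠ w1)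
    (d02 : v0 ≠ v2 ∨ w0 ≠ w2)
    (d12 : v1 ≠ v2 ∨ w1 ≠ w2) :
    (v0 = true → v1 = true → v2 ≠ true) ∧
    (w0 = true → w1 = true → w2 ≠ true) ∧
    (v0 ≠ w0 ∨ v1 ≠ w1 ∨ v2 ≠ w2) ∧
    ∃ σ τ : Fin 3 → Fin 3, Function.Injective σ ∧ Function.Injective τ ∧
      ((∀ i j, ((![![true,true,true], ![v0,v1,v2], ![w0,w1,w2]] : Fin 3 → Fin 3 → Bool) (σ i) (τ j) = true ↔ (!![1,1,1; 1,0,0; 0,0,1] : Matrix (Fin 3) (Fin 3) ℕ) i j = 1)) ∨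
       (∀ i j, ((![![true,true,true], ![v0,v1,v2], ![w0,w1,w2]] : Fin 3 → Fin 3 → Bool) (σ i) (τ j) = true ↔ (!![1,1,0; 1,1,1; 0,1,0] : Matrix (Fin 3) (Fin 3) ℕ) i j = 1)) ∨
       (∀ i j, ((![![true,true,true], ![v0,v1,v2], ![w0,w1,w2]] : Fin 3 → Fin 3 → Bool) (σ i) (τ j) = true ↔ (!![1,1,0; 1,1,1; 0,1,1] : Matrix (Fin 3) (Fin 3) ℕ) i j = 1))) := by
  revert d01 d02 d12
  letI : ∀ (M : Matrix (Fin 3) (Fin 3) ℕ) i j, Decidable (M i j = 1) := fun M i j => Nat.decEq _ _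
  cases v0 <;> cases v1 <;> cases v2 <;> cases w0 <;> cases w1 <;> cases w2 <;> decide

private lemma inj3 {γ : Type*} {p q r : γ} (hpq : p ≠ q) (hpr : p ≠ r) (hqr : q ≠ r) :
    Function.Injective (![p, q, r] : Fin 3 → γ) := by
  intro i j h
  fin_cases i <;> fin_cases j <;> simp_all

private lemma helper3 {α β : Type*} (E : α → β → Prop)
    (htwinC : ∀ x y : β, (∀ a, E a x ↔ E a y) → x = y)
    (a : α) (b₁ b₂ b₃ : β) (h12 : b₁ ≠ b₂) (h13 : b₁ ≠ b₃) (h23 : b₂ ≠ b₃)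
    (e1 : E a b₁) (e2 : E a b₂) (e3 : E a b₃) :
    ∃ P ∈ ({!![1,1,1; 1,0,0; 0,0,1],
             !![1,1,0; 1,1,1; 0,1,0],
             !![1,1,0; 1,1,1; 0,1,1]} : Set (Matrix (Fin 3) (Fin 3) ℕ)),
      ∃ (r : Fin 3 ↪ α) (c : Fin 3 ↪ β), ∀ i j, E (r i) (c j) ↔ P i j = 1 := by
  classical
  have dist : ∀ u v : β, u ≠ v → ∃ x, ¬(E x u ↔ E x v) := by
    intro u v huv
    by_contra h
    push_neg at h
    exact huv (htwinC u v h)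
  obtain ⟨x, hx⟩ := dist b₁ b₂ h12
  -- choose y distinguishing the pair that x does not distinguish
  have key : ∃ x y : α,
      (¬(E x b₁ ↔ E x b₂) ∨ ¬(E y b₁ ↔ E y b₂)) ∧
      (¬(E x b₁ ↔ E x b₃) ∨ ¬(E y b₁ ↔ E y b₃)) ∧
      (¬(E x b₂ ↔ E x b₃) ∨ ¬(E y b₂ ↔ E y b₃)) := by
    by_cases hc : E x b₁ ↔ E x b₃
    · obtain ⟨y, hy⟩ := dist b₁ b₃ h13
      refine ⟨x, y, Or.inl hx, Or.inr hy, Or.inl fun h => hx (hc.trans h.symm)⟩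
    · by_cases hc2 : E x b₂ ↔ E x b₃
      · obtain ⟨y, hy⟩ := dist b₂ b₃ h23
        refine ⟨x, y, Or.inl hx, Or.inl hc, Or.inr hy⟩
      · exact ⟨x, x, Or.inl hx, Or.inl hc, Or.inl hc2⟩
  obtain ⟨x, y, D01, D02, D12⟩ := key
  have toBool : ∀ (p q : Prop) [Decidable p] [Decidable q],
      ¬(p ↔ q) → decide p ≠ decide q := by
    intro p q _ _ h h'
    exact h (decide_eq_decide.mp h')
  obtain ⟨hv, hw, hvw, σ, τ, hσ, hτ, hP⟩ :=
    kernel3 (decide (E x b₁)) (decide (E x b₂)) (decide (E x b₃))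
      (decide (E y b₁)) (decide (E y b₂)) (decide (E y b₃))
      (D01.imp (toBool _ _) (toBool _ _))
      (D02.imp (toBool _ _) (toBool _ _))
      (D12.imp (toBool _ _) (toBool _ _))
  set M : Fin 3 → Fin 3 → Bool :=
    ![![true,true,true],
      ![decide (E x b₁), decide (E x b₂), decide (E x b₃)],
      ![decide (E y b₁), decide (E y b₂), decide (E y b₃)]] with hM
  have hax : a ≠ x := by
    rintro rfl
    exact hv (by simpa using e1) (by simpa using e2) (by simpa using e3)
  have hay : a ≠ y := by
    rintro rfl
    exact hw (by simpa using e1) (by simpa using e2) (by simpa using e3)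
  have hxy : x ≠ y := by
    rintro rfl
    rcases hvw with h | h | h <;> exact h rfl
  have heα : Function.Injective (![a, x, y] : Fin 3 → α) := inj3 hax hay hxy
  have heβ : Function.Injective (![b₁, b₂, b₃] : Fin 3 → β) := inj3 h12 h13 h23
  have keyM : ∀ i j, (E ((![a, x, y] : Fin 3 → α) i) ((![b₁, b₂, b₃] : Fin 3 → β) j) ↔ M i j = true) := by
    intro i j
    fin_cases i <;> fin_cases j <;> simp [hM, e1, e2, e3]
  refine ?_
  have hr : Function.Injective (fun i => (![a, x, y] : Fin 3 → α) (σ i)) := heα.comp hσ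
  have hc : Function.Injective (fun j => (![b₁, b₂, b₃] : Fin 3 → β) (τ j)) := heβ.comp hτ
  rcases hP with h | h | h
  · exact ⟨_, Set.mem_insert _ _, ⟨_, hr⟩, ⟨_, hc⟩,
      fun i j => (keyM (σ i) (τ j)).trans (h i j)⟩
  · exact ⟨_, Set.mem_insert_of_mem _ (Set.mem_insert _ _), ⟨_, hr⟩, ⟨_, hc⟩,
      fun i j => (keyM (σ i) (τ j)).trans (h i j)⟩
  · exact ⟨_, Set.mem_insert_of_mem _ (Set.mem_insert_of_mem _ rfl), ⟨_, hr⟩, ⟨_, hc⟩,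
      fun i j => (keyM (σ i) (τ j)).trans (h i j)⟩

theorem twin_free_degree_three {α β : Type*} (E : α → β → Prop)
    (htwinR : ∀ x y : α, (∀ b, E x b ↔ E y b) → x = y)
    (htwinC : ∀ x y : β, (∀ a, E a x ↔ E a y) → x = y)
    (hdeg : (∃ (a : α) (b₁ b₂ b₃ : β), b₁ ≠ b₂ ∧ b₁ ≠ b₃ ∧ b₂ ≠ b₃ ∧
              E a b₁ ∧ E a b₂ ∧ E a b₃) ∨
            (∃ (b : β) (a₁ a₂ a₃ : α), a₁ ≠ a₂ ∧ a₁ ≠ a₃ ∧ a₂ ≠ a₃ ∧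
              E a₁ b ∧ E a₂ b ∧ E a₃ b)) :
    ∃ P ∈ ({!![1,1,1; 1,0,0; 0,0,1],
             !![1,1,0; 1,1,1; 0,1,0],
             !![1,1,0; 1,1,1; 0,1,1]} : Set (Matrix (Fin 3) (Fin 3) ℕ)),
      (∃ (r : Fin 3 ↪ α) (c : Fin 3 ↪ β), ∀ i j, E (r i) (c j) ↔ P i j = 1) ∨
      (∃ (r : Fin 3 ↪ β) (c : Fin 3 ↪ α), ∀ i j, E (c j) (r i) ↔ P i j = 1) := by
  rcases hdeg with ⟨a, b₁, b₂, b₃, h12, h13, h23, e1, e2, e3⟩ |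
    ⟨b, a₁, a₂, a₃, h12, h13, h23, e1, e2, e3⟩
  · obtain ⟨P, hP, r, c, h⟩ := helper3 E htwinC a b₁ b₂ b₃ h12 h13 h23 e1 e2 e3
    exact ⟨P, hP, Or.inl ⟨r, c, h⟩⟩
  · obtain ⟨P, hP, r, c, h⟩ := helper3 (fun b a => E a b) htwinR b a₁ a₂ a₃ h12 h13 h23 e1 e2 e3
    exact ⟨P, hP, Or.inr ⟨r, c, h⟩⟩
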